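/- (Single-task market is robust to replication.) Let N be a finite set of M ≥ 1 parties, i ∈ N, i' ∉ N, N^R = N ∪ {i'}. Let g : Finset N^R → ℝ be nonnegative, monotone, and supermodular, with g(N) > 0, and suppose i and i' are replicas with respect to g, i.e., g(S ∪ {i}) = g(S ∪ {i'}) = g(S ∪ {i, i'}) for every S ⊆ N^R. Define v(S) = (|S|+1)·g(S) − Σ_{j∈S} g({j}), a_j = g(N) − g({j}) for j ∈ N, and A = Σ_{j∈N} a_j. Let φ(i) be the normalized Shapley value of i computed from v on the market N, and φ^R(i) its normalized Shapley value computed from v on the market N^R. Then 2 · φ^R(i) · (A + a_i) ≤ φ(i) · A + a_i; i.e., party i's total payoff t^R = 2(φ^R(i)(A + a_i) − a_i) after replicating its data once does not exceed its payoff t = φ(i)A − a_i in the original market. -/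

import Mathlib

open Finset

/-- The single-task characteristic function
`v(S) = (|S|+1)·g(S) − Σ_{j∈S} g({j})`. -/
noncomputable def singleTaskValue {ι : Type*} [DecidableEq ι] (g : Finset ι → ℝ)
    (S : Finset ι) : ℝ :=
  ((S.card : ℝ) + 1) * g S - ∑ j ∈ S, g {j}

/-- The normalized Shapley value of party `i` for the characteristic function `v`
in the market `market` with `m = |market|` parties:
`φ(v,i) = (1/v(market)) · Σ_{S ⊆ market \ {i}} (|S|!(m−|S|−1)!/m!) · (v(S∪{i}) − v(S))`. -/
noncomputable def shapley {ι : Type*} [DecidableEq ι] (market : Finset ι)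
    (v : Finset ι → ℝ) (i : ι) : ℝ :=
  (1 / v market) * ∑ S ∈ (market.erase i).powerset,
    (S.card.factorial * (market.card - S.card - 1).factorial : ℝ)
      / (market.card.factorial : ℝ) * (v (insert i S) - v S)

noncomputable def stw (M t : ℕ) : ℝ :=
  (t.factorial * (M - t - 1).factorial : ℝ) / (M.factorial : ℝ)

lemma stw_nonneg (M t : ℕ) : 0 ≤ stw M t := by
  unfold stw; positivity

lemma choose_mul_stw (M t : ℕ) (ht : t + 1 ≤ M) :
    ((M - 1).choose t : ℝ) * stw M t = 1 / M := by
  have h1 : t ≤ M - 1 := by omega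
  have h2 : (M - 1).choose t * t.factorial * ((M - 1) - t).factorial = (M-1).factorial :=
    Nat.choose_mul_factorial_mul_factorial h1
  have h3 : M - t - 1 = (M - 1) - t := by omega
  have h4 : M.factorial = M * (M-1).factorial := by
    have : M = (M - 1) + 1 := by omega
    rw [this, Nat.factorial_succ]
    congr 1 <;> omega
  have hM0 : (0:ℝ) < M := by
    have : 0 < M := by omega
    exact_mod_cast this
  have hfac : ((M-1).factorial : ℝ) ≠ 0 := by
    exact_mod_cast (M-1).factorial_pos.ne'
  have e : ((M-1).choose t : ℝ) * ((t.factorial : ℝ) * ((M-1-t).factorial:ℝ))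
      = ((M-1).factorial : ℝ) := by
    push_cast [← h2]; ring
  unfold stw
  rw [h3, h4]
  push_cast
  rw [eq_div_iff (ne_of_gt hM0), mul_div_assoc', div_mul_eq_mul_div,
    div_eq_iff (by positivity : ((M:ℝ) * (M-1).factorial) ≠ 0)]
  linear_combination (M:ℝ) * e

lemma stw_succ_left (M t : ℕ) (h : t + 1 ≤ M) :
    stw (M+1) t = stw M t * (((M:ℝ) - t) / ((M:ℝ)+1)) := by
  have e0 : M + 1 - t - 1 = M - t := by omega
  have e1 : (M - t).factorial = (M - t) * (M - t - 1).factorial := by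
    rw [show M - t = (M - t - 1) + 1 from by omega, Nat.factorial_succ]
    congr 2
  have e2 : (M+1).factorial = (M+1) * M.factorial := Nat.factorial_succ M
  have hc : ((M - t : ℕ) : ℝ) = (M:ℝ) - t := by
    push_cast [Nat.cast_sub (by omega : t ≤ M)]; ring
  unfold stw
  rw [e0, e1, e2]
  push_cast [hc]
  have h1 : (0:ℝ) < M.factorial := by exact_mod_cast M.factorial_pos
  have h2 : (0:ℝ) < (M:ℝ) + 1 := by positivity
  field_simp

lemma stw_succ_right (M t : ℕ) (h : t + 1 ≤ M) :
    stw (M+1) (t+1) = stw M t * (((t:ℝ) + 1) / ((M:ℝ)+1)) := by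
  have e0 : M + 1 - (t+1) - 1 = M - t - 1 := by omega
  have e1 : (t+1).factorial = (t+1) * t.factorial := Nat.factorial_succ t
  have e2 : (M+1).factorial = (M+1) * M.factorial := Nat.factorial_succ M
  unfold stw
  rw [e0, e1, e2]
  push_cast
  have h1 : (0:ℝ) < M.factorial := by exact_mod_cast M.factorial_pos
  have h2 : (0:ℝ) < (M:ℝ) + 1 := by positivity
  field_simp

lemma stw_sum {ι : Type*} [DecidableEq ι] (E : Finset ι) (M : ℕ) (hE : E.card + 1 = M) :
    ∑ T ∈ E.powerset, stw M T.card = 1 := by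
  rw [Finset.sum_powerset_apply_card (fun t => stw M t)]
  rw [show E.card + 1 = M from hE, show E.card = M - 1 from by omega]
  have : ∀ m ∈ range M, (M-1).choose m • stw M m = 1 / M := by
    intro m hm
    rw [nsmul_eq_mul]
    exact choose_mul_stw M m (mem_range.1 hm)
  rw [sum_congr rfl this, sum_const, card_range, nsmul_eq_mul]
  have hM : 0 < M := by omega
  field_simp

lemma sum_b_le (M : ℕ) : ∑ t ∈ range M, ((t:ℝ)+1)*((M:ℝ)-1-2*t) ≤ 0 := by
  have key : ∀ m : ℕ, ∀ c : ℝ, ∑ t ∈ range m, ((t:ℝ)+1)*(c-2*t)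
      = c*(m*(m+1)/2) - 2*((m:ℝ)-1)*m*(m+1)/3 := by
    intro m
    induction m with
    | zero => intro c; simp
    | succ n ih => intro c; rw [sum_range_succ, ih]; push_cast; ring
  rw [key M ((M:ℝ)-1)]
  rcases Nat.eq_zero_or_pos M with h | h
  · subst h; norm_num
  · have h1 : (1:ℝ) ≤ M := by exact_mod_cast h
    nlinarith [mul_nonneg (mul_nonneg (sub_nonneg.2 h1) (by linarith : (0:ℝ) ≤ M)) (by linarith : (0:ℝ) ≤ (M:ℝ)+1)]

section DC
variable {ι : Type*} [DecidableEq ι]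

lemma double_count (E : Finset ι) (f : Finset ι → ℝ) (t : ℕ)
    (hmono : ∀ T ⊆ E, ∀ x ∈ E, x ∉ T → f T ≤ f (insert x T)) :
    ((E.card - t : ℕ) : ℝ) * ∑ T ∈ E.powersetCard t, f T
      ≤ ((t:ℝ)+1) * ∑ B ∈ E.powersetCard (t+1), f B := by
  have step1 : ((E.card - t : ℕ) : ℝ) * ∑ T ∈ E.powersetCard t, f T
      = ∑ T ∈ E.powersetCard t, ∑ _x ∈ E \ T, f T := by
    rw [mul_sum]
    refine sum_congr rfl fun T hT => ?_
    obtain ⟨hTE, hTc⟩ := mem_powersetCard.1 hT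
    rw [sum_const, card_sdiff_of_subset hTE, hTc, nsmul_eq_mul]
  have step2 : ∑ T ∈ E.powersetCard t, ∑ x ∈ E \ T, f T
      ≤ ∑ T ∈ E.powersetCard t, ∑ x ∈ E \ T, f (insert x T) := by
    refine sum_le_sum fun T hT => sum_le_sum fun x hx => ?_
    obtain ⟨hTE, _⟩ := mem_powersetCard.1 hT
    obtain ⟨hxE, hxT⟩ := mem_sdiff.1 hx
    exact hmono T hTE x hxE hxT
  have step3 : ∑ T ∈ E.powersetCard t, ∑ x ∈ E \ T, f (insert x T)
      = ∑ B ∈ E.powersetCard (t+1), ∑ _x ∈ B, f B := by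
    rw [sum_sigma', sum_sigma']
    refine sum_bij' (fun p _ => ⟨insert p.2 p.1, p.2⟩) (fun q _ => ⟨q.1.erase q.2, q.2⟩)
      ?_ ?_ ?_ ?_ ?_
    · rintro ⟨T, x⟩ hp
      rw [mem_sigma] at hp ⊢
      obtain ⟨hT, hx⟩ := hp
      obtain ⟨hTE, hTc⟩ := mem_powersetCard.1 hT
      obtain ⟨hxE, hxT⟩ := mem_sdiff.1 hx
      refine ⟨mem_powersetCard.2 ⟨insert_subset hxE hTE, ?_⟩, mem_insert_self _ _⟩
      rw [card_insert_of_notMem hxT, hTc]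
    · rintro ⟨B, x⟩ hq
      rw [mem_sigma] at hq ⊢
      obtain ⟨hB, hx⟩ := hq
      obtain ⟨hBE, hBc⟩ := mem_powersetCard.1 hB
      refine ⟨mem_powersetCard.2 ⟨(erase_subset _ _).trans hBE, ?_⟩,
        mem_sdiff.2 ⟨hBE hx, notMem_erase _ _⟩⟩
      rw [card_erase_of_mem hx, hBc]
      omega
    · rintro ⟨T, x⟩ hp
      rw [mem_sigma] at hp
      obtain ⟨hxE, hxT⟩ := mem_sdiff.1 hp.2
      simp [erase_insert hxT]
    · rintro ⟨B, x⟩ hq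
      rw [mem_sigma] at hq
      simp [insert_erase hq.2]
    · rintro ⟨T, x⟩ _
      rfl
  have step4 : ∑ B ∈ E.powersetCard (t+1), ∑ _x ∈ B, f B
      = ((t:ℝ)+1) * ∑ B ∈ E.powersetCard (t+1), f B := by
    rw [mul_sum]
    refine sum_congr rfl fun B hB => ?_
    obtain ⟨_, hBc⟩ := mem_powersetCard.1 hB
    rw [sum_const, hBc, nsmul_eq_mul]
    push_cast
    ring
  rw [step1, ← step4]
  exact step2.trans (le_of_eq step3)

lemma star_le (E : Finset ι) (M : ℕ) (hE : E.card + 1 = M)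
    (d : Finset ι → ℝ) (hd0 : ∀ T ⊆ E, 0 ≤ d T)
    (hdmono : ∀ T ⊆ E, ∀ x ∈ E, x ∉ T → d T ≤ d (insert x T)) :
    ∑ T ∈ E.powerset, stw M T.card * (((T.card:ℝ) + 1) * ((M:ℝ) - 1 - 2*T.card)) * d T ≤ 0 := by
  have hM : 1 ≤ M := by omega
  set S : ℕ → ℝ := fun t => ∑ T ∈ E.powersetCard t, d T with hS
  have hS0 : ∀ t, 0 ≤ S t := by
    intro t
    refine sum_nonneg fun T hT => hd0 T (mem_powersetCard.1 hT).1
  set b : ℕ → ℝ := fun t => ((t:ℝ) + 1) * ((M:ℝ) - 1 - 2*t) with hb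
  have group : ∑ T ∈ E.powerset, stw M T.card * (((T.card:ℝ) + 1) * ((M:ℝ) - 1 - 2*T.card)) * d T
      = ∑ t ∈ range M, stw M t * b t * S t := by
    rw [powerset_card_biUnion, sum_biUnion (fun x _ y _ hxy => pairwise_disjoint_powersetCard E hxy)]
    rw [show E.card + 1 = M from hE]
    refine sum_congr rfl fun t _ => ?_
    rw [hS, mul_sum]
    refine sum_congr rfl fun T hT => ?_
    rw [(mem_powersetCard.1 hT).2]
  rw [group]
  have hcpos : ∀ t, t < M → (0:ℝ) < ((M-1).choose t : ℝ) := by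
    intro t htM
    exact_mod_cast Nat.choose_pos (by omega)
  set D : ℕ → ℝ := fun t => S t / ((M-1).choose t) with hD
  have hSD : ∀ t, t < M → S t = ((M-1).choose t : ℝ) * D t := by
    intro t htM
    rw [hD, mul_div_assoc', mul_comm, mul_div_assoc, div_self (hcpos t htM).ne', mul_one]
  have hD0 : ∀ t, t < M → 0 ≤ D t := by
    intro t htM
    exact div_nonneg (hS0 t) (le_of_lt (hcpos t htM))
  have hstep : ∀ t, t + 1 < M → D t ≤ D (t+1) := by
    intro t ht1
    have hdc := double_count E d t hdmono
    rw [show E.card = M - 1 from by omega] at hdc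
    have hcr : ((M-1).choose (t+1) * (t+1) : ℕ) = ((M-1).choose t * ((M-1) - t) : ℕ) :=
      Nat.choose_succ_right_eq (M-1) t
    have hcrR : ((M-1).choose (t+1) : ℝ) * ((t:ℝ)+1) = ((M-1).choose t : ℝ) * ((M-1-t : ℕ) : ℝ) := by
      exact_mod_cast hcr
    have hc1 := hcpos t (by omega)
    have hc2 := hcpos (t+1) ht1
    rw [hD, div_le_div_iff₀ hc1 hc2]
    have h1 : (0:ℝ) < (t:ℝ) + 1 := by positivity
    nlinarith [mul_le_mul_of_nonneg_right hdc (le_of_lt hc1), hS0 t, hS0 (t+1)]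
  have hDmono : ∀ s u, s ≤ u → u < M → D s ≤ D u := by
    intro s u hsu huM
    obtain ⟨k, rfl⟩ := Nat.exists_eq_add_of_le hsu
    clear hsu
    induction k with
    | zero => simp
    | succ k ih =>
      have h1 : s + k < M := by omega
      calc D s ≤ D (s + k) := ih h1
        _ ≤ D (s + k + 1) := hstep (s+k) (by omega)
        _ = D (s + (k+1)) := by ring_nf
  set tstar := (M - 1) / 2 with htstar
  have htsM : tstar < M := by omega
  have key : ∀ t ∈ range M, stw M t * b t * S t ≤ (1/M) * (b t * D tstar) := by
    intro t htr
    have htM := mem_range.1 htr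
    rw [hSD t htM, show stw M t * b t * (((M-1).choose t : ℝ) * D t)
        = (((M-1).choose t : ℝ) * stw M t) * (b t * D t) from by ring,
      choose_mul_stw M t (by omega)]
    have h1M : (0:ℝ) ≤ 1/M := by positivity
    refine mul_le_mul_of_nonneg_left ?_ h1M
    rcases le_or_gt t tstar with hc | hc
    · have hbt : 0 ≤ b t := by
        rw [hb]
        have h2 : 2 * t + 1 ≤ M := by omega
        have h2R : 2 * (t:ℝ) + 1 ≤ (M:ℝ) := by exact_mod_cast h2
        have h3 : (0:ℝ) ≤ (M:ℝ) - 1 - 2*t := by linarith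
        positivity
      exact mul_le_mul_of_nonneg_left (hDmono t tstar hc htsM) hbt
    · have hbt : b t ≤ 0 := by
        rw [hb]
        have h2 : M ≤ 2 * t := by omega
        have h2R : (M:ℝ) ≤ 2 * t := by exact_mod_cast h2
        have h3 : (M:ℝ) - 1 - 2*t ≤ 0 := by linarith
        exact mul_nonpos_of_nonneg_of_nonpos (by positivity) h3
      exact mul_le_mul_of_nonpos_left (hDmono tstar t (le_of_lt hc) htM) hbt
  calc ∑ t ∈ range M, stw M t * b t * S t
      ≤ ∑ t ∈ range M, (1/M) * (b t * D tstar) := sum_le_sum key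
    _ = ((1/M) * D tstar) * ∑ t ∈ range M, b t := by
        rw [mul_sum]; refine sum_congr rfl fun t _ => by ring
    _ ≤ 0 := by
        refine mul_nonpos_of_nonneg_of_nonpos ?_ ?_
        · have := hD0 tstar htsM
          positivity
        · exact sum_b_le M

end DC

lemma finset_union_singleton {ι : Type*} [DecidableEq ι] (T : Finset ι) (a : ι) :
    T ∪ {a} = insert a T := by
  rw [union_comm, ← insert_eq]

set_option maxHeartbeats 1000000 in
/-- single-task market is robust to replication: for a nonnegative,
monotone and supermodular gain function `g` with `g(N) > 0` and replicas `i, i'`,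
the payoff of party `i` after replicating its data once does not exceed its payoff
in the original market: `2·φ^R(i)·(A + a_i) ≤ φ(i)·A + a_i`. -/
theorem singleTask_robust_to_replication {ι : Type*} [DecidableEq ι] (N : Finset ι)
    (M : ℕ) (hcard : N.card = M) (hM : 1 ≤ M)
    (i : ι) (hi : i ∈ N) (i' : ι) (hi' : i' ∉ N)
    (NR : Finset ι) (hNR : NR = insert i' N)
    (g : Finset ι → ℝ)
    (hg_nonneg : ∀ S ⊆ NR, 0 ≤ g S)
    (hg_mono : ∀ R Q : Finset ι, R ⊆ Q → Q ⊆ NR → g R ≤ g Q)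
    (hg_super : ∀ R Q : Finset ι, R ⊆ Q → Q ⊆ NR → ∀ x ∈ NR \ Q,
      g (insert x R) - g R ≤ g (insert x Q) - g Q)
    (hgN : 0 < g N)
    (hrep : ∀ S ⊆ NR, g (S ∪ {i}) = g (S ∪ {i'}) ∧ g (S ∪ {i'}) = g (S ∪ {i, i'}))
    (a : ι → ℝ) (ha : ∀ j ∈ N, a j = g N - g {j})
    (A : ℝ) (hA : A = ∑ j ∈ N, a j) :
    2 * shapley NR (singleTaskValue g) i * (A + a i)
      ≤ shapley N (singleTaskValue g) i * A + a i := by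
  subst hNR
  set v := singleTaskValue g with hv
  set E := N.erase i with hE
  have hiE : i ∉ E := notMem_erase i N
  have hEN : E ⊆ N := erase_subset i N
  have hNNR : N ⊆ insert i' N := subset_insert i' N
  have hENR : E ⊆ insert i' N := hEN.trans hNNR
  have hii' : i' ≠ i := fun h => hi' (h ▸ hi)
  have hiNR : i ∈ insert i' N := hNNR hi
  have hcE : E.card + 1 = M := by
    rw [hE, card_erase_of_mem hi, hcard]
    omega
  -- replica consequences
  have hrep1 : ∀ T, T ⊆ insert i' N → g (insert i' T) = g (insert i T) := by
    intro T hT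
    have h := (hrep T hT).1
    rw [finset_union_singleton, finset_union_singleton] at h
    exact h.symm
  have hrep2 : ∀ T, T ⊆ insert i' N → g (insert i (insert i' T)) = g (insert i T) := by
    intro T hT
    have h := (hrep T hT).2
    rw [finset_union_singleton] at h
    have e : T ∪ {i, i'} = insert i (insert i' T) := by
      rw [show ({i, i'} : Finset ι) = insert i {i'} from rfl, union_insert, finset_union_singleton]
    rw [e] at h
    rw [← h, hrep1 T hT]
  have hgi' : g {i'} = g {i} := by
    have h := hrep1 ∅ (empty_subset _)
    simpa using h
  have hgNR : g (insert i' N) = g N := by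
    rw [hrep1 N hNNR, insert_eq_self.2 hi]
  -- basic facts for subsets of E
  have hinsN : ∀ T, T ⊆ E → insert i T ⊆ N := fun T hT => insert_subset hi (hT.trans hEN)
  have hiT : ∀ T, T ⊆ E → i ∉ T := fun T hT h => hiE (hT h)
  have hi'T : ∀ T, T ⊆ E → i' ∉ T := fun T hT h => hi' (hEN (hT h))
  have hd0 : ∀ T ⊆ E, 0 ≤ g (insert i T) - g T := by
    intro T hT
    have := hg_mono T (insert i T) (subset_insert i T) ((hinsN T hT).trans hNNR)
    linarith
  have hdmono : ∀ T ⊆ E, ∀ x ∈ E, x ∉ T →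
      g (insert i T) - g T ≤ g (insert i (insert x T)) - g (insert x T) := by
    intro T hT x hx hxT
    refine hg_super T (insert x T) (subset_insert x T)
      (insert_subset (hENR hx) (hT.trans hENR)) i ?_
    rw [mem_sdiff]
    refine ⟨hiNR, fun h => ?_⟩
    rcases mem_insert.1 h with h1 | h2
    · exact hiE (h1 ▸ hx)
    · exact hiT T hT h2
  -- sums of singletons
  have hSgN : ∑ j ∈ N, g {j} = g {i} + ∑ j ∈ E, g {j} := by
    conv_lhs => rw [← insert_erase hi]
    rw [sum_insert (notMem_erase i N)]
  have hA' : A = M * g N - ∑ j ∈ N, g {j} := by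
    rw [hA, sum_congr rfl ha, sum_sub_distrib, sum_const, hcard, nsmul_eq_mul]
  have hai : a i = g N - g {i} := ha i hi
  have hmono2 : ∀ j ∈ N, g {j} ≤ g N := fun j hj =>
    hg_mono {j} N (singleton_subset_iff.2 hj) hNNR
  have hai0 : 0 ≤ a i := by rw [hai]; linarith [hmono2 i hi]
  have hA0 : 0 ≤ A := by
    rw [hA]
    refine sum_nonneg fun j hj => ?_
    rw [ha j hj]
    linarith [hmono2 j hj]
  -- values of v at the grand coalitions
  have hvN : v N = g N + A := by
    rw [hv]
    unfold singleTaskValue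
    rw [hcard]
    linarith [hA']
  have hvNR : v (insert i' N) = g N + A + a i := by
    rw [hv]
    unfold singleTaskValue
    rw [card_insert_of_notMem hi', hcard, hgNR, sum_insert hi', hgi']
    push_cast
    linarith [hA']
  -- marginal contributions
  set m1 : Finset ι → ℝ :=
    fun T => ((T.card:ℝ)+2) * g (insert i T) - ((T.card:ℝ)+1) * g T - g {i} with hm1
  set m2 : Finset ι → ℝ := fun T => g (insert i T) - g {i} with hm2
  have hmarg1 : ∀ T ∈ E.powerset, v (insert i T) - v T = m1 T := by
    intro T hT
    have hTE := mem_powerset.1 hT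
    rw [hv, hm1]
    unfold singleTaskValue
    rw [card_insert_of_notMem (hiT T hTE), sum_insert (hiT T hTE)]
    push_cast
    ring
  have hmarg2 : ∀ T ∈ E.powerset, v (insert i (insert i' T)) - v (insert i' T) = m2 T := by
    intro T hT
    have hTE := mem_powerset.1 hT
    have hTNR : T ⊆ insert i' N := (hTE.trans hEN).trans hNNR
    have h1 : i ∉ insert i' T := by
      intro h
      rcases mem_insert.1 h with h2 | h3
      · exact hii' h2.symm
      · exact hiT T hTE h3
    rw [hv, hm2]
    unfold singleTaskValue
    rw [card_insert_of_notMem h1, card_insert_of_notMem (hi'T T hTE),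
      sum_insert h1, sum_insert (hi'T T hTE), hrep1 T hTNR, hrep2 T hTNR, hgi']
    push_cast
    ring
  -- the two Shapley sums
  set ΦN := ∑ T ∈ E.powerset, stw M T.card * m1 T with hΦN
  set ΦR := ∑ T ∈ E.powerset,
    (stw (M+1) T.card * m1 T + stw (M+1) (T.card+1) * m2 T) with hΦR
  have hshapN : shapley N v i = (1/(g N + A)) * ΦN := by
    unfold shapley
    rw [hvN, hΦN, ← hE, hcard]
    congr 1
    refine sum_congr rfl fun T hT => ?_
    rw [hmarg1 T hT]
    rfl
  have hshapNR : shapley (insert i' N) v i = (1/(g N + A + a i)) * ΦR := by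
    unfold shapley
    rw [hvNR]
    congr 1
    have heq : (insert i' N).erase i = insert i' E := by
      rw [hE, erase_insert_of_ne hii']
    rw [heq, card_insert_of_notMem hi', hcard, powerset_insert]
    have hdisj : Disjoint E.powerset (E.powerset.image (insert i')) := by
      rw [disjoint_left]
      intro S hS hS2
      obtain ⟨T, hT, rfl⟩ := mem_image.1 hS2
      exact hi'T _ (mem_powerset.1 hS) (mem_insert_self i' T)
    rw [sum_union hdisj]
    have himg : ∑ S ∈ E.powerset.image (insert i'),
        (S.card.factorial * (M + 1 - S.card - 1).factorial : ℝ)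
          / ((M+1).factorial : ℝ) * (v (insert i S) - v S)
        = ∑ T ∈ E.powerset, stw (M+1) (T.card+1) * m2 T := by
      rw [sum_image (fun x hx y hy hxy => by
        have h1 : x = (insert i' x).erase i' := (erase_insert (hi'T x (mem_powerset.1 hx))).symm
        rw [h1, hxy, erase_insert (hi'T y (mem_powerset.1 hy))])]
      refine sum_congr rfl fun T hT => ?_
      rw [card_insert_of_notMem (hi'T T (mem_powerset.1 hT)), hmarg2 T hT]
      rfl
    rw [himg, hΦR, sum_add_distrib]
    congr 1
    refine sum_congr rfl fun T hT => ?_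
    rw [hmarg1 T hT]
    rfl
  -- Lemma A : ΦN ≤ g N + A
  have hgE0 : 0 ≤ g E := hg_nonneg E hENR
  have hNsub : insert i E = N := by rw [hE, insert_erase hi]
  have hdE : ∀ T ⊆ E, g (insert i T) - g T ≤ g N - g E := by
    intro T hT
    have h := hg_super T E hT hENR i (by rw [mem_sdiff]; exact ⟨hiNR, hiE⟩)
    rwa [hNsub] at h
  have hMcast : ((E.card : ℝ)) = (M:ℝ) - 1 := by
    have h : ((E.card : ℝ) + 1) = (M:ℝ) := by exact_mod_cast hcE
    linarith
  have hKey1 : ∀ T ∈ E.powerset, m1 T ≤ ((M:ℝ)+1) * g N - (M:ℝ) * g E - g {i} := by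
    intro T hT
    have hTE := mem_powerset.1 hT
    have h1 := hd0 T hTE
    have h2 := hdE T hTE
    have h3 : g (insert i T) ≤ g N := hg_mono _ N (hinsN T hTE) hNNR
    have h4 : (T.card : ℝ) ≤ (M:ℝ) - 1 := by
      rw [← hMcast]
      exact_mod_cast card_le_card hTE
    simp only [hm1]
    have e1 : ((T.card:ℝ)+1) * (g (insert i T) - g T) ≤ (M:ℝ) * (g (insert i T) - g T) :=
      mul_le_mul_of_nonneg_right (by linarith) h1
    have e2 : (M:ℝ) * (g (insert i T) - g T) ≤ (M:ℝ) * (g N - g E) :=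
      mul_le_mul_of_nonneg_left h2 (by positivity)
    nlinarith [e1, e2, h3]
  have hPhiN_le : ΦN ≤ g N + A := by
    have step : ΦN ≤ ∑ T ∈ E.powerset, stw M T.card * (((M:ℝ)+1) * g N - (M:ℝ) * g E - g {i}) := by
      rw [hΦN]
      exact sum_le_sum fun T hT => mul_le_mul_of_nonneg_left (hKey1 T hT) (stw_nonneg M T.card)
    rw [← sum_mul, stw_sum E M hcE, one_mul] at step
    have hEsum : ∑ j ∈ E, g {j} ≤ ((M:ℝ)-1) * g E := by
      have h5 : ∑ j ∈ E, g {j} ≤ ∑ j ∈ E, g E :=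
        sum_le_sum fun j hj => hg_mono {j} E (singleton_subset_iff.2 hj) hENR
      rwa [sum_const, nsmul_eq_mul, hMcast] at h5
    have h6 : ((M:ℝ)+1) * g N - (M:ℝ) * g E - g {i} ≤ g N + A := by
      rw [hA', hSgN]
      nlinarith [hEsum, hgE0]
    linarith [step, h6]
  -- Lemma B : 2 ΦR ≤ ΦN + a i
  have hsum1 : ∑ T ∈ E.powerset, stw M T.card = 1 := stw_sum E M hcE
  have hKey2 : ∀ T ∈ E.powerset,
      2*(stw (M+1) T.card * m1 T + stw (M+1) (T.card+1) * m2 T)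
      ≤ stw M T.card * m1 T + stw M T.card * a i
        + (1/((M:ℝ)+1)) * (stw M T.card * (((T.card:ℝ)+1)*((M:ℝ)-1-2*(T.card:ℝ))) * (g (insert i T) - g T)) := by
    intro T hT
    have hTE := mem_powerset.1 hT
    have htle : T.card + 1 ≤ M := by
      have := card_le_card hTE
      omega
    have hu : 0 ≤ g N - g (insert i T) := by
      have := hg_mono (insert i T) N (hinsN T hTE) hNNR
      linarith
    have hw0 := stw_nonneg M T.card
    have hM1 : ((M:ℝ)+1) ≠ 0 := by positivity
    have huw : 0 ≤ stw M T.card * (g N - g (insert i T)) := mul_nonneg hw0 hu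
    rw [stw_succ_left M T.card htle, stw_succ_right M T.card htle]
    simp only [hm1, hm2]
    rw [hai]
    have iden : stw M T.card * (((T.card:ℝ)+2) * g (insert i T) - ((T.card:ℝ)+1) * g T - g {i})
        + stw M T.card * (g N - g {i})
        + (1/((M:ℝ)+1)) * (stw M T.card * (((T.card:ℝ)+1)*((M:ℝ)-1-2*(T.card:ℝ))) * (g (insert i T) - g T))
        - 2*(stw M T.card * (((M:ℝ)-(T.card:ℝ))/((M:ℝ)+1)) * (((T.card:ℝ)+2) * g (insert i T) - ((T.card:ℝ)+1) * g T - g {i})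
             + stw M T.card * (((T.card:ℝ)+1)/((M:ℝ)+1)) * (g (insert i T) - g {i}))
        = stw M T.card * (g N - g (insert i T)) := by
      field_simp
      ring
    linarith [iden, huw]
  have hstar := star_le E M hcE (fun T => g (insert i T) - g T) hd0 hdmono
  have hPhiR_le : 2 * ΦR ≤ ΦN + a i := by
    calc 2 * ΦR = ∑ T ∈ E.powerset, 2*(stw (M+1) T.card * m1 T + stw (M+1) (T.card+1) * m2 T) := by
          rw [hΦR, mul_sum]
      _ ≤ ∑ T ∈ E.powerset, (stw M T.card * m1 T + stw M T.card * a i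
          + (1/((M:ℝ)+1)) * (stw M T.card * (((T.card:ℝ)+1)*((M:ℝ)-1-2*(T.card:ℝ))) * (g (insert i T) - g T))) :=
          sum_le_sum hKey2
      _ = ΦN + (∑ T ∈ E.powerset, stw M T.card) * a i
          + (1/((M:ℝ)+1)) * ∑ T ∈ E.powerset,
              stw M T.card * (((T.card:ℝ)+1)*((M:ℝ)-1-2*(T.card:ℝ))) * (g (insert i T) - g T) := by
          rw [sum_add_distrib, sum_add_distrib, hΦN, sum_mul, mul_sum]
      _ ≤ ΦN + a i + 0 := by
          rw [hsum1, one_mul]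
          have h1 : (0:ℝ) ≤ 1/((M:ℝ)+1) := by positivity
          have h2 := mul_nonpos_of_nonneg_of_nonpos h1 hstar
          linarith [h2]
      _ = ΦN + a i := by ring
  -- Final assembly
  clear_value ΦN ΦR
  rw [hshapN, hshapNR]
  have hV : (0:ℝ) < g N + A := by linarith
  have hVr : (0:ℝ) < g N + A + a i := by linarith
  have step1 : 2 * ((1/(g N + A + a i)) * ΦR) * (A + a i)
      = (2 * ΦR) * ((A + a i)/(g N + A + a i)) := by ring
  have step2 : (2 * ΦR) * ((A + a i)/(g N + A + a i))
      ≤ (ΦN + a i) * ((A + a i)/(g N + A + a i)) := by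
    refine mul_le_mul_of_nonneg_right hPhiR_le ?_
    positivity
  have iden2 : (1/(g N + A)) * ΦN * A + a i - (ΦN + a i) * ((A + a i)/(g N + A + a i))
      = (a i * g N * ((g N + A) - ΦN)) / ((g N + A) * (g N + A + a i)) := by
    field_simp
    ring
  have h3 : 0 ≤ (a i * g N * ((g N + A) - ΦN)) / ((g N + A) * (g N + A + a i)) := by
    apply div_nonneg
    · apply mul_nonneg (mul_nonneg hai0 (le_of_lt hgN))
      linarith [hPhiN_le]
    · positivity
  rw [step1]
  linarith [step2, iden2, h3]
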